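/- For all positive integers m, n and every BQAP2 instance (q, c, d), there exists a feasible solution (σ,τ) with f2(σ,τ) ≤ A2(q,c,d). -/

import Mathlib

/-- Objective function of BQAP2. -/
noncomputable def f2 {m n : ℕ} (q : Fin m → Fin m → Fin n → Fin n → ℝ)
    (c : Fin m → Fin m → ℝ) (d : Fin n → Fin n → ℝ)
    (σ : Fin m → Fin m) (τ : Fin n → Fin n) : ℝ :=
  (∑ i, ∑ l, q i (σ i) (τ l) l) + (∑ i, c i (σ i)) + (∑ l, d (τ l) l)

/-- Average objective value of BQAP2. -/
noncomputable def A2 {m n : ℕ} (q : Fin m → Fin m → Fin n → Fin n → ℝ)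
    (c : Fin m → Fin m → ℝ) (d : Fin n → Fin n → ℝ) : ℝ :=
  (1 / ((m : ℝ) * n)) * (∑ i, ∑ j, ∑ k, ∑ l, q i j k l)
    + (1 / (m : ℝ)) * (∑ i, ∑ j, c i j)
    + (1 / (n : ℝ)) * (∑ i, ∑ j, d i j)

theorem exists_no_worse_than_average_BQAP2 (m n : ℕ) (hm : 0 < m) (hn : 0 < n)
    (q : Fin m → Fin m → Fin n → Fin n → ℝ)
    (c : Fin m → Fin m → ℝ) (d : Fin n → Fin n → ℝ) :
    ∃ (σ : Fin m → Fin m) (τ : Fin n → Fin n),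
      f2 q c d σ τ ≤ A2 q c d := by
  haveI : NeZero m := ⟨hm.ne'⟩
  haveI : NeZero n := ⟨hn.ne'⟩
  have hshiftm : ∀ (i : Fin m) (h : Fin m → ℝ), ∑ a, h (i + a) = ∑ j, h j := by
    intro i h
    exact Fintype.sum_equiv (Equiv.addLeft i) _ _ (fun a => rfl)
  have hshiftn : ∀ (l : Fin n) (h : Fin n → ℝ), ∑ b, h (l + b) = ∑ k, h k := by
    intro l h
    exact Fintype.sum_equiv (Equiv.addLeft l) _ _ (fun a => rfl)
  -- sum of f2 over all shifts
  have hq : ∑ a : Fin m, ∑ b : Fin n, ∑ i, ∑ l, q i (i + a) (l + b) l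
      = ∑ i, ∑ j, ∑ k, ∑ l, q i j k l := by
    rw [Finset.sum_comm]
    calc ∑ b : Fin n, ∑ a : Fin m, ∑ i, ∑ l, q i (i + a) (l + b) l
        = ∑ b : Fin n, ∑ i, ∑ a : Fin m, ∑ l, q i (i + a) (l + b) l := by
          congr 1; ext b; exact Finset.sum_comm
      _ = ∑ i, ∑ b : Fin n, ∑ a : Fin m, ∑ l, q i (i + a) (l + b) l := Finset.sum_comm
      _ = ∑ i, ∑ b : Fin n, ∑ j, ∑ l, q i j (l + b) l := by
          congr 1; ext i; congr 1; ext b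
          exact hshiftm i (fun j => ∑ l, q i j (l + b) l)
      _ = ∑ i, ∑ j, ∑ b : Fin n, ∑ l, q i j (l + b) l := by
          congr 1; ext i; exact Finset.sum_comm
      _ = ∑ i, ∑ j, ∑ l, ∑ b : Fin n, q i j (l + b) l := by
          congr 1; ext i; congr 1; ext j; exact Finset.sum_comm
      _ = ∑ i, ∑ j, ∑ l, ∑ k, q i j k l := by
          congr 1; ext i; congr 1; ext j; congr 1; ext l
          exact hshiftn l (fun k => q i j k l)
      _ = ∑ i, ∑ j, ∑ k, ∑ l, q i j k l := by
          congr 1; ext i; congr 1; ext j; exact Finset.sum_comm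
  have hc : ∑ a : Fin m, ∑ i, c i (i + a) = ∑ i, ∑ j, c i j := by
    rw [Finset.sum_comm]
    congr 1; ext i; exact hshiftm i (fun j => c i j)
  have hd : ∑ b : Fin n, ∑ l, d (l + b) l = ∑ i, ∑ j, d i j := by
    calc ∑ b : Fin n, ∑ l, d (l + b) l = ∑ l, ∑ b : Fin n, d (l + b) l :=
          Finset.sum_comm
      _ = ∑ l, ∑ k, d k l := by
          congr 1; ext l; exact hshiftn l (fun k => d k l)
      _ = ∑ i, ∑ j, d i j := Finset.sum_comm
  have key : ∑ a : Fin m, ∑ b : Fin n,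
      f2 q c d (fun i => i + a) (fun l => l + b) = (m * n : ℝ) * A2 q c d := by
    have hmn : (m : ℝ) ≠ 0 := Nat.cast_ne_zero.mpr hm.ne'
    have hnn : (n : ℝ) ≠ 0 := Nat.cast_ne_zero.mpr hn.ne'
    simp only [f2, Finset.sum_add_distrib, Finset.sum_const, Finset.card_univ,
      Fintype.card_fin, nsmul_eq_mul]
    rw [hq, ← Finset.mul_sum, hc, hd, A2]
    field_simp
  -- conclude by averaging
  by_contra hcon
  push_neg at hcon
  have hlt : ∀ ab : Fin m × Fin n, (m * n : ℝ) * A2 q c d <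
      (m * n : ℝ) * f2 q c d (fun i => i + ab.1) (fun l => l + ab.2) := by
    intro ab
    have := hcon (fun i => i + ab.1) (fun l => l + ab.2)
    have hpos : (0:ℝ) < (m:ℝ) * n := by positivity
    exact (mul_lt_mul_iff_right₀ hpos).mpr this
  have hsum : ∑ ab : Fin m × Fin n, f2 q c d (fun i => i + ab.1) (fun l => l + ab.2)
      = (m * n : ℝ) * A2 q c d := by
    rw [Fintype.sum_prod_type]; exact key
  have hne : (Finset.univ : Finset (Fin m × Fin n)).Nonempty := Finset.univ_nonempty
  have hlt2 : ∑ ab : Fin m × Fin n, A2 q c d <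
      ∑ ab : Fin m × Fin n, f2 q c d (fun i => i + ab.1) (fun l => l + ab.2) := by
    apply Finset.sum_lt_sum_of_nonempty hne
    intro ab _
    exact hcon (fun i => i + ab.1) (fun l => l + ab.2)
  rw [hsum, Finset.sum_const, Finset.card_univ, Fintype.card_prod, Fintype.card_fin,
    Fintype.card_fin, nsmul_eq_mul, Nat.cast_mul] at hlt2
  exact lt_irrefl _ hlt2
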